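/- For t, s : Fin n → K and t', s' : Fin m → K, there is a K-algebra isomorphism from the tangent algebra K^{n+m}_{(t ⊕ t', s ⊕ s')} (built from the concatenated parameter families on Fin (n+m)) to the tensor product K^n_{(t,s)} ⊗[K] K^m_{(t',s')}, sending the class of X (Fin.castAdd m i) to (class of X i) ⊗ 1 for i : Fin n and the class of X (Fin.natAdd n j) to 1 ⊗ (class of X j) for j : Fin m. In particular every n-th order tangent algebra is isomorphic to an n-fold tensor product of first-order tangent algebras. -/

import Mathlib

open MvPolynomial
open scoped TensorProduct

/-- The defining ideal of the `n`-th order tangent algebra `K^n_{(t,s)}`. -/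
noncomputable abbrev tangentIdeal (K : Type*) [CommRing K] {n : ℕ} (t s : Fin n → K) :
    Ideal (MvPolynomial (Fin n) K) :=
  Ideal.span (Set.range fun i : Fin n => (X i - C (t i)) * (X i - C (s i)))

/-- The `n`-th order tangent algebra `K^n_{(t,s)}`. -/
abbrev TangentAlgebra (K : Type*) [CommRing K] {n : ℕ} (t s : Fin n → K) :=
  MvPolynomial (Fin n) K ⧸ tangentIdeal K t s

set_option maxHeartbeats 1000000
set_option synthInstance.maxHeartbeats 1000000

private lemma liftₐ_mk_aux {K R S : Type*} [CommRing K] [CommRing R] [CommRing S]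
    [Algebra K R] [Algebra K S] (I : Ideal R) (f : R →ₐ[K] S)
    (h : ∀ a ∈ I, f a = 0) (x : R) :
    Ideal.Quotient.liftₐ I f h (Ideal.Quotient.mk I x) = f x := by
  rw [Ideal.Quotient.liftₐ_apply]
  rfl

/-- The tangent algebra for concatenated parameter families is `K`-algebra isomorphic to
the tensor product of the two tangent algebras, via `[X (castAdd m i)] ↦ [X i] ⊗ 1` and
`[X (natAdd n j)] ↦ 1 ⊗ [X j]`. -/
theorem tangentAlgebra_append_iso_tensor (K : Type*) [CommRing K] (n m : ℕ)
    (t s : Fin n → K) (t' s' : Fin m → K) :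
    ∃ φ : TangentAlgebra K (Fin.append t t') (Fin.append s s') ≃ₐ[K]
        TangentAlgebra K t s ⊗[K] TangentAlgebra K t' s',
      (∀ i : Fin n,
        φ (Ideal.Quotient.mk (tangentIdeal K (Fin.append t t') (Fin.append s s'))
            (X (Fin.castAdd m i))) =
          Ideal.Quotient.mk (tangentIdeal K t s) (X i) ⊗ₜ[K] 1) ∧
      (∀ j : Fin m,
        φ (Ideal.Quotient.mk (tangentIdeal K (Fin.append t t') (Fin.append s s'))
            (X (Fin.natAdd n j))) =
          1 ⊗ₜ[K] Ideal.Quotient.mk (tangentIdeal K t' s') (X j)) := by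
  set I := tangentIdeal K (Fin.append t t') (Fin.append s s')
  set A := TangentAlgebra K t s
  set B := TangentAlgebra K t' s'
  set mkI := Ideal.Quotient.mkₐ K I
  -- forward map
  set fbar : MvPolynomial (Fin (n + m)) K →ₐ[K] A ⊗[K] B :=
    aeval (Fin.append
      (fun i => Ideal.Quotient.mk (tangentIdeal K t s) (X i) ⊗ₜ[K] 1)
      (fun j => 1 ⊗ₜ[K] Ideal.Quotient.mk (tangentIdeal K t' s') (X j))) with hfbar
  have hker : ∀ a ∈ I, fbar a = 0 := by
    intro a ha
    refine Submodule.span_induction ?_ ?_ ?_ ?_ ha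
    · rintro x ⟨k, rfl⟩
      induction k using Fin.addCases with
      | left i =>
        simp only [hfbar, map_mul, map_sub, aeval_X, aeval_C, Fin.append_left]
        rw [Algebra.TensorProduct.algebraMap_apply, Algebra.TensorProduct.algebraMap_apply]
        rw [← TensorProduct.sub_tmul, ← TensorProduct.sub_tmul,
          Algebra.TensorProduct.tmul_mul_tmul, mul_one]
        have : (Ideal.Quotient.mk (tangentIdeal K t s) (X i) -
            algebraMap K A (t i)) * (Ideal.Quotient.mk (tangentIdeal K t s) (X i) -
            algebraMap K A (s i)) = 0 := by
          rw [show (algebraMap K A) (t i) = Ideal.Quotient.mk (tangentIdeal K t s) (C (t i)) from rfl,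
            show (algebraMap K A) (s i) = Ideal.Quotient.mk (tangentIdeal K t s) (C (s i)) from rfl,
            ← map_sub, ← map_sub, ← map_mul, Ideal.Quotient.eq_zero_iff_mem]
          exact Ideal.subset_span ⟨i, rfl⟩
        rw [this, TensorProduct.zero_tmul]
      | right j =>
        simp only [hfbar, map_mul, map_sub, aeval_X, aeval_C, Fin.append_right]
        rw [show (algebraMap K (A ⊗[K] B)) (t' j) = 1 ⊗ₜ[K] algebraMap K B (t' j) from
            Algebra.TensorProduct.algebraMap_apply' _,
          show (algebraMap K (A ⊗[K] B)) (s' j) = 1 ⊗ₜ[K] algebraMap K B (s' j) from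
            Algebra.TensorProduct.algebraMap_apply' _]
        rw [← TensorProduct.tmul_sub, ← TensorProduct.tmul_sub,
          Algebra.TensorProduct.tmul_mul_tmul, mul_one]
        have : (Ideal.Quotient.mk (tangentIdeal K t' s') (X j) -
            algebraMap K B (t' j)) * (Ideal.Quotient.mk (tangentIdeal K t' s') (X j) -
            algebraMap K B (s' j)) = 0 := by
          rw [show (algebraMap K B) (t' j) = Ideal.Quotient.mk (tangentIdeal K t' s') (C (t' j)) from rfl,
            show (algebraMap K B) (s' j) = Ideal.Quotient.mk (tangentIdeal K t' s') (C (s' j)) from rfl,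
            ← map_sub, ← map_sub, ← map_mul, Ideal.Quotient.eq_zero_iff_mem]
          exact Ideal.subset_span ⟨j, rfl⟩
        rw [this, TensorProduct.tmul_zero]
    · simp
    · intro x y _ _ hx hy; simp [hx, hy]
    · intro r x _ hx
      rw [smul_eq_mul, map_mul, hx]
      exact mul_zero (fbar r)
  set f : (MvPolynomial (Fin (n + m)) K ⧸ I) →ₐ[K] A ⊗[K] B :=
    Ideal.Quotient.liftₐ I fbar hker with hf
  -- backward maps
  set uA : MvPolynomial (Fin n) K →ₐ[K] (MvPolynomial (Fin (n + m)) K ⧸ I) :=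
    aeval (fun i : Fin n => Ideal.Quotient.mk I (X (Fin.castAdd m i))) with huA
  set uB : MvPolynomial (Fin m) K →ₐ[K] (MvPolynomial (Fin (n + m)) K ⧸ I) :=
    aeval (fun j : Fin m => Ideal.Quotient.mk I (X (Fin.natAdd n j))) with huB
  have hgA : ∀ a ∈ tangentIdeal K t s, uA a = 0 := by
    intro a ha
    refine Submodule.span_induction ?_ (by simp) (fun x y _ _ hx hy => by simp [hx, hy])
      (fun r x _ hx => by rw [smul_eq_mul, map_mul, hx, mul_zero]) ha
    rintro x ⟨i, rfl⟩
    have : (uA ((X i - C (t i)) * (X i - C (s i))) : MvPolynomial (Fin (n + m)) K ⧸ I) =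
        Ideal.Quotient.mk I ((X (Fin.castAdd m i) - C (Fin.append t t' (Fin.castAdd m i))) *
          (X (Fin.castAdd m i) - C (Fin.append s s' (Fin.castAdd m i)))) := by
      simp [huA, Fin.append_left]
      rfl
    rw [this, Ideal.Quotient.eq_zero_iff_mem]
    exact Ideal.subset_span ⟨Fin.castAdd m i, rfl⟩
  have hgB : ∀ a ∈ tangentIdeal K t' s', uB a = 0 := by
    intro a ha
    refine Submodule.span_induction ?_ (by simp) (fun x y _ _ hx hy => by simp [hx, hy])
      (fun r x _ hx => by rw [smul_eq_mul, map_mul, hx, mul_zero]) ha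
    rintro x ⟨j, rfl⟩
    have : (uB ((X j - C (t' j)) * (X j - C (s' j))) : MvPolynomial (Fin (n + m)) K ⧸ I) =
        Ideal.Quotient.mk I ((X (Fin.natAdd n j) - C (Fin.append t t' (Fin.natAdd n j))) *
          (X (Fin.natAdd n j) - C (Fin.append s s' (Fin.natAdd n j)))) := by
      simp [huB, Fin.append_right]
      rfl
    rw [this, Ideal.Quotient.eq_zero_iff_mem]
    exact Ideal.subset_span ⟨Fin.natAdd n j, rfl⟩
  set gA : A →ₐ[K] (MvPolynomial (Fin (n + m)) K ⧸ I) :=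
    Ideal.Quotient.liftₐ (tangentIdeal K t s) uA hgA with hgAdef
  set gB : B →ₐ[K] (MvPolynomial (Fin (n + m)) K ⧸ I) :=
    Ideal.Quotient.liftₐ (tangentIdeal K t' s') uB hgB with hgBdef
  set g : A ⊗[K] B →ₐ[K] (MvPolynomial (Fin (n + m)) K ⧸ I) :=
    Algebra.TensorProduct.lift gA gB (fun a b => Commute.all _ _) with hg
  have hfX : ∀ k, f (Ideal.Quotient.mk I (X k)) =
      Fin.append (fun i => Ideal.Quotient.mk (tangentIdeal K t s) (X i) ⊗ₜ[K] 1)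
        (fun j => 1 ⊗ₜ[K] Ideal.Quotient.mk (tangentIdeal K t' s') (X j)) k := by
    intro k
    simp [hf, hfbar]
    exact aeval_X _ k
  have h1 : f.comp g = AlgHom.id K (A ⊗[K] B) := by
    refine Algebra.TensorProduct.ext ?_ ?_
    · refine Ideal.Quotient.algHom_ext K (MvPolynomial.algHom_ext fun i => ?_)
      show f (g (Ideal.Quotient.mk (tangentIdeal K t s) (X i) ⊗ₜ[K] 1)) = _
      have : g (Ideal.Quotient.mk (tangentIdeal K t s) (X i) ⊗ₜ[K] 1) =
          Ideal.Quotient.mk I (X (Fin.castAdd m i)) := by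
        rw [hg]
        simp only [Algebra.TensorProduct.lift_tmul, map_one, mul_one, one_mul]
        rw [hgAdef, liftₐ_mk_aux, huA, aeval_X]
      rw [this, hfX, Fin.append_left]
      rfl
    · refine Ideal.Quotient.algHom_ext K (MvPolynomial.algHom_ext fun i => ?_)
      show f (g ((1 : A) ⊗ₜ[K] Ideal.Quotient.mk (tangentIdeal K t' s') (X i))) = _
      have : g ((1 : A) ⊗ₜ[K] Ideal.Quotient.mk (tangentIdeal K t' s') (X i)) =
          Ideal.Quotient.mk I (X (Fin.natAdd n i)) := by
        rw [hg]
        simp only [Algebra.TensorProduct.lift_tmul, map_one, mul_one, one_mul]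
        rw [hgBdef, liftₐ_mk_aux, huB, aeval_X]
      rw [this, hfX, Fin.append_right]
      rfl
  have h2 : g.comp f = AlgHom.id K (MvPolynomial (Fin (n + m)) K ⧸ I) := by
    refine Ideal.Quotient.algHom_ext K (MvPolynomial.algHom_ext fun k => ?_)
    show g (f (Ideal.Quotient.mk I (X k))) = Ideal.Quotient.mk I (X k)
    rw [hfX]
    induction k using Fin.addCases with
    | left i =>
      rw [Fin.append_left]
      rw [hg]
      simp only [Algebra.TensorProduct.lift_tmul, map_one, mul_one, one_mul]
      rw [hgAdef, liftₐ_mk_aux, huA, aeval_X]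
    | right j =>
      rw [Fin.append_right]
      rw [hg]
      simp only [Algebra.TensorProduct.lift_tmul, map_one, mul_one, one_mul]
      rw [hgBdef, liftₐ_mk_aux, huB, aeval_X]
  refine ⟨AlgEquiv.ofAlgHom f g h1 h2, fun i => ?_, fun j => ?_⟩
  · rw [show (AlgEquiv.ofAlgHom f g h1 h2)
        (Ideal.Quotient.mk I (X (Fin.castAdd m i))) =
        f (Ideal.Quotient.mk I (X (Fin.castAdd m i))) from rfl, hfX, Fin.append_left]
  · rw [show (AlgEquiv.ofAlgHom f g h1 h2)
        (Ideal.Quotient.mk I (X (Fin.natAdd n j))) =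
        f (Ideal.Quotient.mk I (X (Fin.natAdd n j))) from rfl, hfX, Fin.append_right]
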